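/- Let k ≥ 2 be an integer and let ξ > 0 be real. Then the complex Hermitian 2×2 matrix ξ·𝟙₂ + iΩ₁ + (1−2/k)·iΩ₁ is positive semidefinite if and only if ξ ≥ 2(1 − 1/k). (In particular, the single-mode additive noise channel with X = 𝟙 and Y = ξ·𝟙 is k-extendible if and only if ξ ≥ 2(1 − 1/k).) -/

import Mathlib

open Matrix Complex ComplexOrder

/-- The standard symplectic form on one mode. -/
noncomputable def Omega1 : Matrix (Fin 2) (Fin 2) ℝ := !![0, 1; -1, 0]

/-- Complexification of a real matrix. -/
noncomputable def cplx {m p : Type*} (M : Matrix m p ℝ) : Matrix m p ℂ :=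
  M.map (fun x => (x : ℂ))

/-- The additive noise channel (`X = 𝟙`, `Y = ξ𝟙`) is `k`-extendible iff
`ξ ≥ 2(1 − 1/k)`: the complex Hermitian matrix `ξ𝟙 + iΩ₁ + (1−2/k)iΩ₁` is
positive semidefinite iff `ξ ≥ 2(1 − 1/k)`. -/
theorem additive_noise_channel_k_ext_iff
    (k : ℕ) (hk : 2 ≤ k) (ξ : ℝ) (hξ : 0 < ξ) :
    (cplx (ξ • (1 : Matrix (Fin 2) (Fin 2) ℝ)) + Complex.I • cplx Omega1
      + ((1 - 2/(k:ℂ)) * Complex.I) • cplx Omega1).PosSemidef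
    ↔ ξ ≥ 2 * (1 - 1/(k:ℝ)) := by
  have hkR : (2:ℝ) ≤ (k:ℝ) := by exact_mod_cast hk
  have hk0 : (k:ℝ) ≠ 0 := by positivity
  obtain ⟨a, ha⟩ : ∃ a : ℝ, a = 2 * (1 - 1/(k:ℝ)) := ⟨_, rfl⟩
  rw [← ha]
  have ha0 : 0 ≤ a := by
    have : 1/(k:ℝ) ≤ 1 := by
      rw [div_le_one (by linarith)]; linarith
    rw [ha]; linarith
  have hM : (cplx (ξ • (1 : Matrix (Fin 2) (Fin 2) ℝ)) + Complex.I • cplx Omega1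
      + ((1 - 2/(k:ℂ)) * Complex.I) • cplx Omega1)
      = !![(ξ:ℂ), (a:ℂ)*Complex.I; -((a:ℂ)*Complex.I), (ξ:ℂ)] := by
    have hc : ((k:ℂ)) ≠ 0 := by exact_mod_cast (by positivity : (k:ℝ) ≠ 0)
    ext i j
    fin_cases i <;> fin_cases j <;>
      simp [cplx, Omega1, ha, Matrix.smul_apply, Matrix.one_apply]
    all_goals (push_cast; field_simp; ring)
  rw [hM]
  constructor
  · intro h
    have h2 := h.dotProduct_mulVec_nonneg ![1, Complex.I]
    have hval : star ![1, Complex.I] ⬝ᵥ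
        (!![(ξ:ℂ), (a:ℂ)*Complex.I; -((a:ℂ)*Complex.I), (ξ:ℂ)] *ᵥ ![1, Complex.I])
        = ((2*ξ - 2*a : ℝ) : ℂ) := by
      simp [mulVec, dotProduct, Fin.sum_univ_two]
      push_cast
      ring_nf
      simp only [Complex.I_sq]
      ring
    rw [hval] at h2
    have : (0:ℝ) ≤ 2*ξ - 2*a := by exact_mod_cast h2
    rw [ha] at *
    linarith
  · intro hge
    have hξa : 0 ≤ ξ - a := by linarith
    set L : Matrix (Fin 2) (Fin 3) ℂ :=
      !![(Real.sqrt (ξ - a) : ℂ), 0, (Real.sqrt a : ℂ);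
         0, (Real.sqrt (ξ - a) : ℂ), -(Real.sqrt a : ℂ) * Complex.I] with hL
    have hfac : !![(ξ:ℂ), (a:ℂ)*Complex.I; -((a:ℂ)*Complex.I), (ξ:ℂ)] = L * Lᴴ := by
      have h1 : ((Real.sqrt (ξ - a) : ℂ))^2 = ((ξ - a : ℝ) : ℂ) := by
        rw [sq, ← Complex.ofReal_mul, Real.mul_self_sqrt hξa]
      have h2 : ((Real.sqrt a : ℂ))^2 = ((a : ℝ) : ℂ) := by
        rw [sq, ← Complex.ofReal_mul, Real.mul_self_sqrt ha0]
      ext i j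
      fin_cases i <;> fin_cases j <;>
        simp [hL, Matrix.mul_apply, Fin.sum_univ_three, Complex.conj_ofReal]
      all_goals (ring_nf; simp only [Complex.I_sq, h1, h2]; push_cast; ring)
    rw [hfac]
    exact posSemidef_self_mul_conjTranspose L
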